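/- Assume the double bound x/(log x - 1 - 1/log x - 1/log^2 x) < π(x) < x/(log x - 1 - 1/log x - 3.83/log^2 x) for all x ≥ 1772201. Then f_k := p_k^{1+1/k} - p_k satisfies f_k = log^2 p_k - log p_k - 1 + o(1) as k → ∞. -/

import Mathlib

open Real

/-- `p k` is the `k`-th prime, 1-indexed: `p 1 = 2`, `p 2 = 3`, ... -/
noncomputable def p (k : ℕ) : ℕ := Nat.nth Nat.Prime (k - 1)

lemma t_bound (L kk X XI : ℝ) (hL : 14 ≤ L) (hk0 : 0 < kk)
    (hX : 0 < X) (hXI : 0 < XI) (hXXI : X * XI = 1)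
    (hX4 : L^4/24 ≤ X) (hkX : X < kk * L) :
    L/kk ≤ L^2 * XI ∧ L^2 * XI ≤ 24/L^2 := by
  have hL0 : (0:ℝ) < L := by linarith
  have hXIle : XI * L^4 ≤ 24 := by
    have h := mul_le_mul_of_nonneg_right hX4 hXI.le
    rw [hXXI] at h
    linarith [h]
  constructor
  · rw [div_le_iff₀ hk0]
    have hstep : L^2 * XI * kk * X = L^2 * kk := by
      rw [show L^2*XI*kk*X = L^2*kk*(X*XI) by ring, hXXI, mul_one]
    have h' : L * X ≤ L^2 * XI * kk * X := by
      rw [hstep]; linarith [mul_lt_mul_of_pos_left hkX hL0]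
    exact le_of_mul_le_mul_right h' hX
  · rw [le_div_iff₀ (by positivity)]
    linarith [hXIle]

lemma key_alg (L kk X XI t E : ℝ) (hL : 14 ≤ L) (hk : 1 ≤ kk)
    (hX : 0 < X) (hXI : 0 < XI) (hXXI : X * XI = 1)
    (hX4 : L^4/24 ≤ X)
    (ht : t = L / kk)
    (hE1 : 1 + t ≤ E) (hE2 : E ≤ 1 + t + 2*t^2)
    (hb1 : X < kk * (L - 1 - 1/L - 1/L^2))
    (hb2 : kk * (L - 1 - 1/L - 3.83/L^2) < X) :
    |X*E - X - (L^2-L-1)| ≤ 3.83/L + 2*L^4*XI := by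
  have hL0 : (0:ℝ) < L := by linarith
  have hk0 : (0:ℝ) < kk := by linarith
  have h1L : 1/L ≤ 1/14 := by
    rw [div_le_div_iff₀ hL0 (by norm_num)]; linarith
  have h1L0 : 0 < 1/L := by positivity
  have h1L2 : 0 < 1/L^2 := by positivity
  have h2L : 1/L^2 ≤ 1 := by
    rw [div_le_one (by positivity)]; nlinarith
  have h3L : 3.83/L^2 ≤ 1 := by
    rw [div_le_one (by positivity)]; nlinarith
  have hD1 : 0 < L - 1 - 1/L - 1/L^2 := by linarith
  have hD2 : 0 < L - 1 - 1/L - 3.83/L^2 := by linarith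
  have ht0 : 0 < t := by rw [ht]; positivity
  have hXt : X * t = L * (X / kk) := by rw [ht]; field_simp
  have hXk1 : X / kk < L - 1 - 1/L - 1/L^2 := by
    rw [div_lt_iff₀ hk0]; linarith [hb1]
  have hXk2 : L - 1 - 1/L - 3.83/L^2 < X / kk := by
    rw [lt_div_iff₀ hk0]; linarith [hb2]
  have hkX : X < kk * L := by
    have h := mul_le_mul_of_nonneg_left (show L - 1 - 1/L - 1/L^2 ≤ L by linarith) hk0.le
    linarith
  obtain ⟨ht_lt, _⟩ := t_bound L kk X XI hL hk0 hX hXI hXXI hX4 hkX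
  rw [← ht] at ht_lt
  -- lower bound
  have hlow : L^2 - L - 1 - 3.83/L < X*E - X := by
    have e1 : L * (L - 1 - 1/L - 3.83/L^2) = L^2 - L - 1 - 3.83/L := by
      field_simp
    have e2 : L * (L - 1 - 1/L - 3.83/L^2) < L * (X/kk) :=
      mul_lt_mul_of_pos_left hXk2 hL0
    have e3 : X * t ≤ X*E - X := by linarith [mul_le_mul_of_nonneg_left hE1 hX.le]
    linarith [hXt ▸ e3, e1 ▸ e2]
  -- upper bound
  have hup : X*E - X ≤ L^2 - L - 1 + 2*L^4*XI := by
    have e0 : X*E - X ≤ X*t + 2*(X*t)*t := by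
      linarith [mul_le_mul_of_nonneg_left hE2 hX.le]
    have e1 : L * (X/kk) < L * (L - 1 - 1/L - 1/L^2) :=
      mul_lt_mul_of_pos_left hXk1 hL0
    have e2 : L * (L - 1 - 1/L - 1/L^2) ≤ L^2 - L - 1 := by
      have h : L * (L - 1 - 1/L - 1/L^2) = L^2 - L - 1 - 1/L := by field_simp
      linarith [h]
    have hXkL : X / kk ≤ L := by linarith
    have hXt_le : X * t ≤ L * L := by
      rw [hXt]; exact mul_le_mul_of_nonneg_left hXkL hL0.le
    have e3 : 2*(X*t)*t ≤ 2*L^4*XI := by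
      have h := mul_le_mul hXt_le ht_lt ht0.le (by positivity : (0:ℝ) ≤ L * L)
      linarith [h]
    linarith [hXt ▸ e1]
  rw [abs_le]
  have hg1 : 0 ≤ 3.83/L := by positivity
  have hg2 : 0 ≤ 2*L^4*XI := by positivity
  constructor <;> linarith

lemma key_est (L kk : ℝ) (hL : 14 ≤ L) (hk : 1 ≤ kk)
    (h1 : exp L / (L - 1 - 1/L - 1/L^2) < kk)
    (h2 : kk < exp L / (L - 1 - 1/L - 3.83/L^2)) :
    |exp L * exp (L/kk) - exp L - (L^2 - L - 1)| ≤ 3.83/L + 2*L^4*exp (-L) := by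
  have hL0 : (0:ℝ) < L := by linarith
  have hk0 : (0:ℝ) < kk := by linarith
  have hx : (0:ℝ) < exp L := exp_pos L
  have h1L : 1/L ≤ 1/14 := by
    rw [div_le_div_iff₀ hL0 (by norm_num)]; linarith
  have h1L0 : 0 < 1/L := by positivity
  have h1L2 : 0 < 1/L^2 := by positivity
  have h2L : 1/L^2 ≤ 1 := by
    rw [div_le_one (by positivity)]; nlinarith
  have h3L : 3.83/L^2 ≤ 1 := by
    rw [div_le_one (by positivity)]; nlinarith
  have hD1 : 0 < L - 1 - 1/L - 1/L^2 := by linarith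
  have hD2 : 0 < L - 1 - 1/L - 3.83/L^2 := by linarith
  have hb1 : exp L < kk * (L - 1 - 1/L - 1/L^2) := by
    rwa [div_lt_iff₀ hD1] at h1
  have hb2 : kk * (L - 1 - 1/L - 3.83/L^2) < exp L := by
    rwa [lt_div_iff₀ hD2] at h2
  have hX4 : L^4/24 ≤ exp L := by
    have h := Real.pow_div_factorial_le_exp L hL0.le 4
    norm_num [Nat.factorial] at h
    linarith
  have hXXI : exp L * exp (-L) = 1 := by rw [← exp_add]; simp
  have hXI : (0:ℝ) < exp (-L) := exp_pos _
  have hkX : exp L < kk * L := by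
    have h := mul_le_mul_of_nonneg_left (show L - 1 - 1/L - 1/L^2 ≤ L by linarith) hk0.le
    linarith
  obtain ⟨ht_lt, h24⟩ := t_bound L kk (exp L) (exp (-L)) hL hk0 hx hXI hXXI hX4 hkX
  set t : ℝ := L / kk with ht
  have ht0 : 0 < t := by positivity
  have ht_half : t ≤ 1/2 := by
    have : (24:ℝ)/L^2 ≤ 1/2 := by
      rw [div_le_div_iff₀ (by positivity) (by norm_num)]; nlinarith
    linarith
  have hE1 : 1 + t ≤ exp t := by linarith [add_one_le_exp t]
  have hE2 : exp t ≤ 1 + t + 2*t^2 := by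
    have h1t : 0 < 1 - t := by linarith
    have hneg : 1 - t ≤ exp (-t) := by linarith [add_one_le_exp (-t)]
    have hle : exp t ≤ 1 / (1 - t) := by
      rw [le_div_iff₀ h1t]
      calc exp t * (1 - t) ≤ exp t * exp (-t) :=
            mul_le_mul_of_nonneg_left hneg (exp_pos t).le
        _ = 1 := by rw [← exp_add]; simp
    have h2' : 1 / (1-t) ≤ 1 + t + 2*t^2 := by
      rw [div_le_iff₀ h1t]
      nlinarith [mul_nonneg (sq_nonneg t) (by linarith : (0:ℝ) ≤ 1 - 2*t)]
    linarith
  exact key_alg L kk (exp L) (exp (-L)) t (exp t) hL hk hx hXI hXXI hX4 ht hE1 hE2 hb1 hb2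

lemma pi_p (k : ℕ) (hk : 1 ≤ k) : Nat.primeCounting (p k) = k := by
  unfold p
  rw [Nat.primeCounting, Nat.primeCounting', Nat.count_succ,
    Nat.count_nth_of_infinite Nat.infinite_setOf_prime,
    if_pos (Nat.prime_nth_prime (k-1))]
  omega

theorem stmt_10
    (axler : ∀ x : ℝ, 1772201 ≤ x →
      x / (Real.log x - 1 - 1 / Real.log x - 1 / (Real.log x) ^ 2) <
          (Nat.primeCounting ⌊x⌋₊ : ℝ) ∧
        (Nat.primeCounting ⌊x⌋₊ : ℝ) <
          x / (Real.log x - 1 - 1 / Real.log x - 3.83 / (Real.log x) ^ 2)) :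
    Filter.Tendsto
      (fun k : ℕ =>
        ((p k : ℝ) ^ (1 + 1 / (k : ℝ)) - (p k : ℝ)) -
          ((Real.log (p k)) ^ 2 - Real.log (p k) - 1))
      Filter.atTop (nhds 0) := by
  have hmono : StrictMono (Nat.nth Nat.Prime) := Nat.nth_strictMono Nat.infinite_setOf_prime
  have hpt : Filter.Tendsto (fun k : ℕ => p k) Filter.atTop Filter.atTop := by
    have := hmono.tendsto_atTop.comp (Filter.tendsto_sub_atTop_nat 1)
    exact this
  have hptR : Filter.Tendsto (fun k : ℕ => ((p k : ℕ) : ℝ)) Filter.atTop Filter.atTop :=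
    tendsto_natCast_atTop_atTop.comp hpt
  have hLt : Filter.Tendsto (fun k : ℕ => Real.log (p k)) Filter.atTop Filter.atTop :=
    Real.tendsto_log_atTop.comp hptR
  -- the error bound tends to 0
  have hG : Filter.Tendsto (fun y : ℝ => 3.83/y + 2*y^4*Real.exp (-y)) Filter.atTop (nhds 0) := by
    have hA : Filter.Tendsto (fun y : ℝ => (3.83:ℝ)/y) Filter.atTop (nhds 0) :=
      Filter.Tendsto.div_atTop tendsto_const_nhds Filter.tendsto_id
    have hB := (Real.tendsto_pow_mul_exp_neg_atTop_nhds_zero 4).const_mul (2:ℝ)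
    have := hA.add hB
    simpa [mul_assoc] using this
  have hGk : Filter.Tendsto
      (fun k : ℕ => 3.83/(Real.log (p k)) + 2*(Real.log (p k))^4*Real.exp (-(Real.log (p k))))
      Filter.atTop (nhds 0) := by
    have := hG.comp hLt
    exact this
  apply squeeze_zero_norm' _ hGk
  -- eventual bound
  have hev1 : ∀ᶠ k : ℕ in Filter.atTop, 1772201 ≤ p k := hpt.eventually_ge_atTop 1772201
  have hev2 : ∀ᶠ k : ℕ in Filter.atTop, 1 ≤ k := Filter.eventually_ge_atTop 1
  filter_upwards [hev1, hev2] with k hpk hk1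
  set x : ℝ := ((p k : ℕ) : ℝ) with hxdef
  have hx1772 : (1772201:ℝ) ≤ x := by rw [hxdef]; exact_mod_cast hpk
  have hx0 : (0:ℝ) < x := by linarith
  set L : ℝ := Real.log x with hLdef
  have hL14 : (14:ℝ) ≤ L := by
    rw [hLdef, Real.le_log_iff_exp_le hx0]
    have h1 : Real.exp 14 = Real.exp 1 ^ (14:ℕ) := by
      rw [← Real.exp_nat_mul]; norm_num
    have h2 : Real.exp 1 ^ (14:ℕ) ≤ 2.7182818286 ^ (14:ℕ) :=
      pow_le_pow_left₀ (Real.exp_pos 1).le Real.exp_one_lt_d9.le 14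
    have h3 : (2.7182818286:ℝ) ^ (14:ℕ) ≤ 1772201 := by norm_num
    linarith
  have hxexp : x = Real.exp L := by rw [hLdef, Real.exp_log hx0]
  have hkk1 : (1:ℝ) ≤ (k:ℝ) := by exact_mod_cast hk1
  obtain ⟨ha1, ha2⟩ := axler x hx1772
  rw [show ⌊x⌋₊ = p k by rw [hxdef]; exact Nat.floor_natCast _] at ha1 ha2
  rw [pi_p k hk1] at ha1 ha2
  rw [← hLdef] at ha1 ha2
  have h1 : Real.exp L / (L - 1 - 1/L - 1/L^2) < (k:ℝ) := by rwa [← hxexp]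
  have h2 : (k:ℝ) < Real.exp L / (L - 1 - 1/L - 3.83/L^2) := by rwa [← hxexp]
  have hkey := key_est L (k:ℝ) hL14 hkk1 h1 h2
  have hrpow : x ^ ((1:ℝ) + 1/(k:ℝ)) = Real.exp L * Real.exp (L/(k:ℝ)) := by
    rw [Real.rpow_def_of_pos hx0, ← hLdef, ← Real.exp_add]
    congr 1
    field_simp
  rw [Real.norm_eq_abs]
  calc |x ^ ((1:ℝ) + 1/(k:ℝ)) - x - (L^2 - L - 1)|
      = |Real.exp L * Real.exp (L/(k:ℝ)) - Real.exp L - (L^2 - L - 1)| := by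
        rw [hrpow, ← hxexp]
    _ ≤ 3.83/L + 2*L^4*Real.exp (-L) := hkey
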